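/- Let T be a rooted weighted tree, u a vertex with parent edge e_u, ξ ≥ 0, k ≥ 1, l ≥ 0. Suppose Γ_ξ(u,k,l) ≤ ξ·ω(T_u) − c(e_u), where Γ_ξ(u,k,l) is the minimum of γ_ξ(A) = Σ_{e ∈ ∂A_1 \ {e_u}} (ξ·ω(T_e)+c(e)) over connected k-subpartitions A = {A_1,…,A_k} of V(T_u) with u ∈ A_1, residue ≤ l, and φ_T(A_i) ≤ ξ for all i ≥ 2. Then μ_ξ(u,k,l) = 1. -/

import Mathlib

open scoped Classical

noncomputable section

/-- A finite rooted weighted tree, encoded by a parent function. The root has an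
auxiliary parent edge `e_root` of weight `0` (`parent root = root`). Edges are
identified with their lower endpoints: the parent edge `e_v` of a vertex `v`
has weight `c v`. -/
structure RTree (V : Type) [Fintype V] [DecidableEq V] where
  root : V
  parent : V → V
  w : V → ℚ
  c : V → ℚ
  parent_root : parent root = root
  reaches_root : ∀ v : V, ∃ n : ℕ, parent^[n] v = root
  w_pos : ∀ v : V, 0 < w v
  c_pos : ∀ v : V, v ≠ root → 0 < c v
  c_root : c root = 0

namespace RTree

variable {V : Type} [Fintype V] [DecidableEq V] (T : RTree V)

/-- `v` lies in the subtree rooted at `u` (equivalently, edge `e_v ≤ e_u` in the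
natural partial order induced by the root). -/
def below (u v : V) : Prop := ∃ n : ℕ, T.parent^[n] v = u

/-- The vertex set of the subtree `T_u` (also of `T_{e_u}`). -/
def desc (u : V) : Finset V := Finset.univ.filter (fun v => T.below u v)

/-- Total vertex weight `ω(A)`. -/
def wsum (A : Finset V) : ℚ := ∑ v ∈ A, T.w v

/-- The (lower endpoints of) edges with exactly one endpoint in `A`, relative to a
ground set `W` of edges/vertices (`W = univ` gives the whole tree `T`). -/
def boundaryW (W A : Finset V) : Finset V :=
  W.filter (fun v => Xor' (v ∈ A) (T.parent v ∈ A))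

/-- The edge boundary `∂A` in the whole tree. -/
def boundary (A : Finset V) : Finset V := T.boundaryW Finset.univ A

/-- `c(∂A)` relative to ground set `W`. -/
def cutW (W A : Finset V) : ℚ := ∑ v ∈ T.boundaryW W A, T.c v

/-- `c(∂A)` in the whole tree. -/
def cut (A : Finset V) : ℚ := T.cutW Finset.univ A

/-- Vertex set of the subtree `T_u` relative to the ground set `W`. -/
def descW (W : Finset V) (u : V) : Finset V := T.desc u ∩ W

/-- `ε_ξ(e_v) = ξ·ω(T_{e_v}) + c(e_v)`. -/
def eps (ξ : ℚ) (v : V) : ℚ := ξ * T.wsum (T.desc v) + T.c v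

/-- `A` induces a connected subgraph (a subtree) of the tree: some `a ∈ A` is
reachable from every `v ∈ A` by a parent-chain staying inside `A`. -/
def connectedIn (A : Finset V) : Prop :=
  ∃ a ∈ A, ∀ v ∈ A, ∃ n : ℕ, T.parent^[n] v = a ∧ ∀ m : ℕ, m ≤ n → T.parent^[m] v ∈ A

/-- The children of a vertex. -/
def children (u : V) : Finset V :=
  Finset.univ.filter (fun v => T.parent v = u ∧ v ≠ u)

/-- `A` witnesses `μ_ξ(u,k,l) = 1` relative to ground set `W`: a connected
`k`-subpartition of `T_u` whose parts all have conductance at most `ξ`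
(boundaries computed in the ground set), with at most `l` residue vertices. -/
def muWitnessW (W : Finset V) (ξ : ℚ) (u : V) {k : ℕ} (A : Fin k → Finset V) (l : ℕ) : Prop :=
  (∀ i, (A i).Nonempty) ∧ (∀ i j, i ≠ j → Disjoint (A i) (A j)) ∧
  (∀ i, A i ⊆ T.descW W u) ∧ (∀ i, T.connectedIn (A i)) ∧
  (∀ i, T.cutW W (A i) / T.wsum (A i) ≤ ξ) ∧
  ((T.descW W u \ Finset.univ.biUnion A).card ≤ l)

/-- `μ_ξ(u,k,l) = 1` relative to ground set `W`. -/
def muW (W : Finset V) (ξ : ℚ) (u : V) (k l : ℕ) : Prop :=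
  ∃ A : Fin k → Finset V, T.muWitnessW W ξ u A l

/-- `A` witnesses `μ_ξ(u,k,l) = 1` (in the whole tree `T`). -/
def muWitness (ξ : ℚ) (u : V) {k : ℕ} (A : Fin k → Finset V) (l : ℕ) : Prop :=
  T.muWitnessW Finset.univ ξ u A l

/-- `μ_ξ(u,k,l) = 1`. -/
def mu (ξ : ℚ) (u : V) (k l : ℕ) : Prop := T.muW Finset.univ ξ u k l

/-- Membership in `𝒞_ξ(u,k,l)` relative to ground set `W`: a connected
`k`-subpartition of `T_u` with `u ∈ A₁`, residue at most `l`, and conductance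
at most `ξ` for every part other than `A₁`. -/
def inCW (W : Finset V) (ξ : ℚ) (u : V) {k : ℕ} (A : Fin k → Finset V) (l : ℕ) : Prop :=
  (∀ i, (A i).Nonempty) ∧ (∀ i j, i ≠ j → Disjoint (A i) (A j)) ∧
  (∀ i, A i ⊆ T.descW W u) ∧ (∀ i, T.connectedIn (A i)) ∧
  (∀ h : 0 < k, u ∈ A ⟨0, h⟩) ∧
  (∀ i : Fin k, i.val ≠ 0 → T.cutW W (A i) / T.wsum (A i) ≤ ξ) ∧
  ((T.descW W u \ Finset.univ.biUnion A).card ≤ l)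

/-- Membership in `𝒞_ξ(u,k,l)`. -/
def inC (ξ : ℚ) (u : V) {k : ℕ} (A : Fin k → Finset V) (l : ℕ) : Prop :=
  T.inCW Finset.univ ξ u A l

/-- `γ_ξ(𝒜) = Σ_{e ∈ ∂A₁ \ {e_u}} ε_ξ(e)` relative to ground set `W`. -/
def gammaValW (W : Finset V) (ξ : ℚ) (u : V) (A1 : Finset V) : ℚ :=
  ∑ v ∈ (T.boundaryW W A1).erase u, (ξ * T.wsum (T.descW W v) + T.c v)

/-- `γ_ξ(𝒜) = Σ_{e ∈ ∂A₁ \ {e_u}} ε_ξ(e)`. -/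
def gammaVal (ξ : ℚ) (u : V) (A1 : Finset V) : ℚ := T.gammaValW Finset.univ ξ u A1

/-- `Γ_ξ(u,k,l) = min over 𝒞_ξ(u,k,l) of γ_ξ`, with value `+∞` (`⊤` of `EReal`)
when `𝒞_ξ(u,k,l)` is empty, relative to ground set `W`. -/
def GammaW (W : Finset V) (ξ : ℚ) (u : V) (k l : ℕ) : EReal :=
  sInf {x : EReal | ∃ (h : 0 < k) (A : Fin k → Finset V),
    T.inCW W ξ u A l ∧ x = ((T.gammaValW W ξ u (A ⟨0, h⟩) : ℝ) : EReal)}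

/-- `Γ_ξ(u,k,l)`. -/
def Gamma (ξ : ℚ) (u : V) (k l : ℕ) : EReal := T.GammaW Finset.univ ξ u k l

end RTree


namespace RTree

variable {V : Type} [Fintype V] [DecidableEq V] (T : RTree V)

lemma iter_root' (m : ℕ) : T.parent^[m] T.root = T.root :=
  Function.iterate_fixed T.parent_root m

lemma eq_root_of_period {v : V} {n : ℕ} (hn : 0 < n) (hp : T.parent^[n] v = v) :
    v = T.root := by
  obtain ⟨N, hN⟩ := T.reaches_root v
  have hper : ∀ q : ℕ, T.parent^[n * q] v = v := by
    intro q
    induction q with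
    | zero => simp
    | succ q ih =>
      rw [Nat.mul_succ, Function.iterate_add_apply, hp]; exact ih
  have key : T.parent^[n * (N + 1)] v = T.root := by
    have hle : N ≤ n * (N + 1) := by nlinarith
    have h1 : n * (N + 1) = (n * (N + 1) - N) + N := by omega
    rw [h1, Function.iterate_add_apply, hN, T.iter_root']
  exact (hper (N + 1)).symm.trans key

lemma mem_desc {u v : V} : v ∈ T.desc u ↔ ∃ n, T.parent^[n] v = u := by
  show v ∈ Finset.univ.filter _ ↔ _; rw [Finset.mem_filter]; simp [below]

lemma mem_desc_self (u : V) : u ∈ T.desc u := (T.mem_desc).2 ⟨0, rfl⟩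

lemma upward_closed {u : V} {A : Finset V} (hA : A ⊆ T.desc u) (hu : u ∈ A)
    (hc : T.connectedIn A) : ∀ v ∈ A, v ≠ u → T.parent v ∈ A := by
  obtain ⟨a, ha, hchain⟩ := hc
  have hau : a = u := by
    obtain ⟨n, hn, hmem⟩ := hchain u hu
    rcases Nat.eq_zero_or_pos n with h0 | hpos
    · rw [h0] at hn; simpa using hn.symm
    · by_cases hroot : u = T.root
      · rw [hroot] at hn ⊢; rw [T.iter_root'] at hn; exact hn.symm
      · exfalso
        have h1 : T.parent^[1] u ∈ A := hmem 1 hpos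
        have h2 : T.parent^[1] u ∈ T.desc u := hA h1
        obtain ⟨j, hj⟩ := (T.mem_desc).1 h2
        have hj' : T.parent^[j + 1] u = u := by
          rw [Function.iterate_add_apply]; exact hj
        exact hroot (T.eq_root_of_period (by omega) hj')
  intro v hv hvne
  obtain ⟨n, hn, hmem⟩ := hchain v hv
  rcases Nat.eq_zero_or_pos n with h0 | hpos
  · rw [h0] at hn; simp at hn; exact absurd (hn.trans hau) hvne
  · simpa using hmem 1 hpos

lemma mem_boundary {A : Finset V} {v : V} :
    v ∈ T.boundary A ↔ Xor' (v ∈ A) (T.parent v ∈ A) := by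
  simp [boundary, boundaryW]

lemma cover {u : V} {A : Finset V} (hA : A ⊆ T.desc u) (hu : u ∈ A)
    (hup : ∀ v ∈ A, v ≠ u → T.parent v ∈ A) :
    T.desc u \ A ⊆ ((T.boundary A).erase u).biUnion T.desc := by
  intro x hx
  rw [Finset.mem_sdiff] at hx
  obtain ⟨hxd, hxA⟩ := hx
  obtain ⟨n, hn⟩ := (T.mem_desc).1 hxd
  have hex : ∃ m, T.parent^[m] x ∈ A := ⟨n, hn ▸ hu⟩
  have hm : T.parent^[Nat.find hex] x ∈ A := Nat.find_spec hex
  have hmpos : 0 < Nat.find hex := by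
    rcases Nat.eq_zero_or_pos (Nat.find hex) with h0 | hp
    · exfalso; rw [h0] at hm; simp at hm; exact hxA hm
    · exact hp
  set m := Nat.find hex with hmdef
  set v := T.parent^[m - 1] x with hv
  have hvA : v ∉ A := Nat.find_min hex (by omega)
  have hpv : T.parent v ∈ A := by
    have hstep : T.parent^[(m - 1) + 1] x = T.parent (T.parent^[m - 1] x) :=
      Function.iterate_succ_apply' _ _ _
    have hm1 : m - 1 + 1 = m := by omega
    rw [hm1] at hstep
    rw [hv, ← hstep]; exact hm
  have hvb : v ∈ T.boundary A := (T.mem_boundary).2 (Or.inr ⟨hpv, hvA⟩)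
  have hvu : v ≠ u := fun hh => hvA (hh ▸ hu)
  rw [Finset.mem_biUnion]
  exact ⟨v, Finset.mem_erase.2 ⟨hvu, hvb⟩, (T.mem_desc).2 ⟨m - 1, rfl⟩⟩

lemma wsum_nonneg (A : Finset V) : 0 ≤ T.wsum A :=
  Finset.sum_nonneg fun v _ => (T.w_pos v).le

lemma wsum_mono {A B : Finset V} (h : A ⊆ B) : T.wsum A ≤ T.wsum B :=
  Finset.sum_le_sum_of_subset_of_nonneg h fun v _ _ => (T.w_pos v).le

lemma wsum_pos {A : Finset V} (h : A.Nonempty) : 0 < T.wsum A :=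
  Finset.sum_pos (fun v _ => T.w_pos v) h

lemma wsum_union_le (A B : Finset V) : T.wsum (A ∪ B) ≤ T.wsum A + T.wsum B := by
  have h1 : T.wsum (A ∪ B) = T.wsum A + T.wsum (B \ A) := by
    rw [← Finset.union_sdiff_self_eq_union]
    unfold wsum
    exact Finset.sum_union Finset.disjoint_sdiff
  have h2 : T.wsum (B \ A) ≤ T.wsum B := T.wsum_mono (Finset.sdiff_subset)
  linarith

lemma wsum_biUnion_le (S : Finset V) (f : V → Finset V) :
    T.wsum (S.biUnion f) ≤ ∑ v ∈ S, T.wsum (f v) := by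
  induction S using Finset.induction_on with
  | empty => simp [wsum]
  | @insert a s h ih =>
    rw [Finset.biUnion_insert, Finset.sum_insert h]
    exact le_trans (T.wsum_union_le _ _) (by linarith)

lemma c_nonneg (v : V) : 0 ≤ T.c v := by
  by_cases h : v = T.root
  · rw [h, T.c_root]
  · exact (T.c_pos v h).le

lemma cut_le (u : V) (A : Finset V) :
    T.cut A ≤ T.c u + ∑ v ∈ (T.boundary A).erase u, T.c v := by
  have hsub : T.boundary A ⊆ insert u ((T.boundary A).erase u) := by
    intro v hv
    by_cases h : v = u
    · simp [h]
    · exact Finset.mem_insert_of_mem (Finset.mem_erase.2 ⟨h, hv⟩)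
  calc T.cut A = ∑ v ∈ T.boundary A, T.c v := rfl
    _ ≤ ∑ v ∈ insert u ((T.boundary A).erase u), T.c v :=
        Finset.sum_le_sum_of_subset_of_nonneg hsub (fun v _ _ => T.c_nonneg v)
    _ = T.c u + ∑ v ∈ (T.boundary A).erase u, T.c v :=
        Finset.sum_insert (Finset.notMem_erase _ _)

lemma A1_cond {u : V} {A1 : Finset V} (ξ : ℚ) (hξ : 0 ≤ ξ)
    (hA : A1 ⊆ T.desc u) (hu : u ∈ A1) (hc : T.connectedIn A1)
    (hγ : T.gammaVal ξ u A1 ≤ ξ * T.wsum (T.desc u) - T.c u) :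
    T.cut A1 ≤ ξ * T.wsum A1 := by
  have hup := T.upward_closed hA hu hc
  set S := (T.boundary A1).erase u with hS
  have hγeq : T.gammaVal ξ u A1 = ∑ v ∈ S, (ξ * T.wsum (T.desc v) + T.c v) := by
    unfold gammaVal gammaValW descW
    apply Finset.sum_congr rfl
    intro v _
    rw [Finset.inter_univ]
  have hγ' : ∑ v ∈ S, (ξ * T.wsum (T.desc v) + T.c v)
      ≤ ξ * T.wsum (T.desc u) - T.c u := hγeq ▸ hγ
  have hcov := T.cover hA hu hup
  have h1 : T.wsum (T.desc u) - T.wsum A1 ≤ ∑ v ∈ S, T.wsum (T.desc v) := by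
    have e : T.wsum (T.desc u \ A1) = T.wsum (T.desc u) - T.wsum A1 := by
      unfold wsum; rw [Finset.sum_sdiff_eq_sub hA]
    calc T.wsum (T.desc u) - T.wsum A1 = T.wsum (T.desc u \ A1) := e.symm
      _ ≤ T.wsum (S.biUnion T.desc) := T.wsum_mono hcov
      _ ≤ ∑ v ∈ S, T.wsum (T.desc v) := T.wsum_biUnion_le S T.desc
  have h2 : T.cut A1 ≤ T.c u + ∑ v ∈ S, T.c v := T.cut_le u A1
  have h1' : T.wsum (T.desc u) - ∑ v ∈ S, T.wsum (T.desc v) ≤ T.wsum A1 := by linarith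
  have h3 := mul_le_mul_of_nonneg_left h1' hξ
  rw [mul_sub] at h3
  have h4 : ∑ v ∈ S, (ξ * T.wsum (T.desc v) + T.c v)
      = ξ * ∑ v ∈ S, T.wsum (T.desc v) + ∑ v ∈ S, T.c v := by
    rw [Finset.sum_add_distrib, Finset.mul_sum]
  linarith

end RTree


/-- If `Γ_ξ(u,k,l) ≤ ξ·ω(T_u) − c(e_u)`, then `μ_ξ(u,k,l) = 1`. -/

theorem stmt11 {V : Type} [Fintype V] [DecidableEq V] (T : RTree V)
    (ξ : ℚ) (hξ : 0 ≤ ξ) (u : V) (k l : ℕ) (hk : 1 ≤ k)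
    (h : T.Gamma ξ u k l ≤ (((ξ * T.wsum (T.desc u) - T.c u : ℚ) : ℝ) : EReal)) :
    T.mu ξ u k l := by
  classical
  have hk0 : 0 < k := hk
  set Sset := {x : EReal | ∃ (hh : 0 < k) (A : Fin k → Finset V),
    T.inCW Finset.univ ξ u A l ∧
      x = ((T.gammaValW Finset.univ ξ u (A ⟨0, hh⟩) : ℝ) : EReal)} with hSset
  have hGam : T.Gamma ξ u k l = sInf Sset := rfl
  have hne : Sset.Nonempty := by
    by_contra hemp
    rw [Set.not_nonempty_iff_eq_empty] at hemp
    rw [hGam, hemp, sInf_empty] at h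
    exact (h.trans_lt (EReal.coe_lt_top _)).false
  have hfin : Sset.Finite := by
    apply Set.Finite.subset (Set.finite_range (fun A : Fin k → Finset V =>
      ((T.gammaValW Finset.univ ξ u (A ⟨0, hk0⟩) : ℝ) : EReal)))
    rintro x ⟨hh, A, hA, hx⟩
    exact ⟨A, hx.symm⟩
  have hmem : sInf Sset ∈ Sset := hne.csInf_mem hfin
  obtain ⟨hh, A, hA, hx⟩ := hmem
  have hx' : ((T.gammaValW Finset.univ ξ u (A ⟨0, hh⟩) : ℝ) : EReal)
      ≤ (((ξ * T.wsum (T.desc u) - T.c u : ℚ) : ℝ) : EReal) := by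
    rw [← hx]; rw [hGam] at h; exact h
  have hγq : T.gammaValW Finset.univ ξ u (A ⟨0, hh⟩)
      ≤ ξ * T.wsum (T.desc u) - T.c u := by
    have := EReal.coe_le_coe_iff.1 hx'
    exact_mod_cast this
  obtain ⟨hne', hdis, hsub, hconn, hmem0, hcond, hres⟩ := hA
  have hdW : T.descW Finset.univ u = T.desc u := Finset.inter_univ _
  refine ⟨A, hne', hdis, hsub, hconn, ?_, hres⟩
  intro i
  by_cases hi : (i : ℕ) = 0
  · have hieq : i = ⟨0, hh⟩ := Fin.ext hi
    rw [hieq]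
    have hA1sub : A ⟨0, hh⟩ ⊆ T.desc u := by
      have hs := hsub ⟨0, hh⟩; rw [hdW] at hs; exact hs
    have hcut := T.A1_cond ξ hξ hA1sub (hmem0 hh) (hconn _) hγq
    rw [div_le_iff₀ (T.wsum_pos (hne' _))]
    exact hcut
  · exact hcond i hi
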